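/- arXiv:1209.1706 — 5 statements merged into one kernel-verified Lean document; each statement's English description precedes it below -/
import Mathlib

section
/- For every integer n ≥ 2 and every real β > 0, the sum over all set partitions P of {1,…,n} of p(P | β) · ( #P/β² − Σ_{j=0}^{n-1} 1/(β+j)² ) equals (1/β)·Σ_{j=1}^{n-1} j/(β+j)², where p(P | β) = β^{#P} · Π_{B ∈ P} (|B| − 1)! / (β(β+1)⋯(β+n−1)). That is, the Fisher information of the Multivariate Ewens Distribution with respect to β equals (1/β)Σ_{j=1}^{n-1} j/(β+j)², so the Jeffreys prior is π_n^J(β) ∝ sqrt( (1/β)Σ_{j=1}^{n-1} j/(β+j)² ). -/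
open Finset Classical

/-- Partitions of an arbitrary finset `s`. -/
noncomputable def parts {α : Type*} [DecidableEq α] (s : Finset α) :
    Finset (Finset (Finset α)) :=
  s.powerset.powerset.filter (fun P => ∅ ∉ P ∧ ∀ i ∈ s, ∃! B, B ∈ P ∧ i ∈ B)

variable {α : Type*} [DecidableEq α]

lemma mem_parts {s : Finset α} {P : Finset (Finset α)} :
    P ∈ parts s ↔ (∀ B ∈ P, B ⊆ s) ∧ ∅ ∉ P ∧ ∀ i ∈ s, ∃! B, B ∈ P ∧ i ∈ B := by
  simp only [parts, mem_filter, mem_powerset, and_congr_left_iff]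
  intro _
  constructor
  · intro h B hB; exact mem_powerset.mp (h hB)
  · intro h B hB; exact mem_powerset.mpr (h B hB)

lemma parts_block_subset {s : Finset α} {P : Finset (Finset α)} (h : P ∈ parts s)
    {B : Finset α} (hB : B ∈ P) : B ⊆ s := (mem_parts.mp h).1 B hB

lemma parts_not_empty_mem {s : Finset α} {P : Finset (Finset α)} (h : P ∈ parts s) :
    ∅ ∉ P := (mem_parts.mp h).2.1

lemma parts_existsUnique {s : Finset α} {P : Finset (Finset α)} (h : P ∈ parts s)
    {i : α} (hi : i ∈ s) : ∃! B, B ∈ P ∧ i ∈ B := (mem_parts.mp h).2.2 i hi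

lemma parts_sum_card {s : Finset α} {P : Finset (Finset α)} (hP : P ∈ parts s) :
    ∑ B ∈ P, B.card = s.card := by
  have hbi : P.biUnion id = s := by
    ext i
    simp only [mem_biUnion, id]
    constructor
    · rintro ⟨B, hB, hiB⟩; exact parts_block_subset hP hB hiB
    · intro hi
      obtain ⟨B, hB, -⟩ := parts_existsUnique hP hi
      exact ⟨B, hB.1, hB.2⟩
  have hdisj : ∀ B ∈ P, ∀ B' ∈ P, B ≠ B' → Disjoint (id B) (id B') := by
    intro B hB B' hB' hne
    simp only [id]
    refine Finset.disjoint_left.mpr fun i hiB hiB' => hne ?_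
    have hi : i ∈ s := parts_block_subset hP hB hiB
    obtain ⟨B₀, hB₀, huniq⟩ := parts_existsUnique hP hi
    rw [huniq B ⟨hB, hiB⟩, huniq B' ⟨hB', hiB'⟩]
  rw [← hbi, Finset.card_biUnion hdisj]
  rfl


noncomputable def insPart (a : α) (pc : Σ _ : Finset (Finset α), Finset α) :
    Finset (Finset α) :=
  insert (insert a pc.2) (pc.1.erase pc.2)

noncomputable def delPart (a : α) (Q : Finset (Finset α)) :
    Σ _ : Finset (Finset α), Finset α :=
  if h : ∃! B, B ∈ Q ∧ a ∈ B then
    if Q.choose (fun B => a ∈ B) h = {a} then ⟨Q.erase (Q.choose (fun B => a ∈ B) h), ∅⟩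
    else ⟨insert ((Q.choose (fun B => a ∈ B) h).erase a) (Q.erase (Q.choose (fun B => a ∈ B) h)),
      (Q.choose (fun B => a ∈ B) h).erase a⟩
  else ⟨∅, ∅⟩

section Bij

variable {a : α} {s : Finset α} (ha : a ∉ s) {P : Finset (Finset α)} (hP : P ∈ parts s)
  {c : Finset α} (hc : c ∈ insert ∅ P)

include ha hP hc

lemma ins_c_subset : c ⊆ s := by
  rcases mem_insert.mp hc with rfl | h
  · exact empty_subset s
  · exact parts_block_subset hP h

lemma ins_a_not_mem_c : a ∉ c := fun h => ha (ins_c_subset ha hP hc h)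

lemma ins_a_not_mem_block {B : Finset α} (hB : B ∈ P) : a ∉ B :=
  fun h => ha (parts_block_subset hP hB h)

lemma ins_new_block_not_mem : insert a c ∉ P.erase c := by
  intro h
  exact ins_a_not_mem_block ha hP hc (mem_of_mem_erase h) (mem_insert_self a c)

lemma insPart_mem : insPart a ⟨P, c⟩ ∈ parts (insert a s) := by
  have hac := ins_a_not_mem_c ha hP hc
  rw [mem_parts]
  refine ⟨?_, ?_, ?_⟩
  · intro B hB
    rcases mem_insert.mp hB with rfl | hB
    · exact insert_subset_insert a (ins_c_subset ha hP hc)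
    · exact (parts_block_subset hP (mem_of_mem_erase hB)).trans (subset_insert a s)
  · intro hmem
    rcases mem_insert.mp hmem with h | h
    · exact (insert_ne_empty a c) h.symm
    · exact parts_not_empty_mem hP (mem_of_mem_erase h)
  · intro i hi
    rcases mem_insert.mp hi with rfl | his
    · refine ⟨insert i c, ⟨mem_insert_self _ _, mem_insert_self _ _⟩, ?_⟩
      rintro B ⟨hB, hiB⟩
      rcases mem_insert.mp hB with rfl | hB
      · rfl
      · exact absurd hiB (ins_a_not_mem_block ha hP hc (mem_of_mem_erase hB))
    · have hia : i ≠ a := fun h => ha (h ▸ his)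
      obtain ⟨B₀, ⟨hB₀P, hiB₀⟩, huniq⟩ := parts_existsUnique hP his
      by_cases hic : i ∈ c
      · -- the block containing i is insert a c  (here c = B₀, c ∈ P)
        have hcP : c ∈ P := by
          rcases mem_insert.mp hc with rfl | h
          · exact absurd hic (notMem_empty i)
          · exact h
        refine ⟨insert a c, ⟨mem_insert_self _ _, mem_insert_of_mem hic⟩, ?_⟩
        rintro B ⟨hB, hiB⟩
        rcases mem_insert.mp hB with rfl | hB
        · rfl
        · exact absurd (huniq B ⟨mem_of_mem_erase hB, hiB⟩ ▸ huniq c ⟨hcP, hic⟩ ▸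
            (ne_of_mem_erase hB)) (by simp [huniq B ⟨mem_of_mem_erase hB, hiB⟩,
              huniq c ⟨hcP, hic⟩])
      · have hB₀c : B₀ ≠ c := fun h => hic (h ▸ hiB₀)
        refine ⟨B₀, ⟨mem_insert_of_mem (mem_erase.mpr ⟨hB₀c, hB₀P⟩), hiB₀⟩, ?_⟩
        rintro B ⟨hB, hiB⟩
        rcases mem_insert.mp hB with rfl | hB
        · rcases mem_insert.mp hiB with rfl | h
          · exact absurd rfl hia
          · exact absurd h hic
        · exact huniq B ⟨mem_of_mem_erase hB, hiB⟩

lemma insPart_existsUnique_a : ∃! B, B ∈ insPart a ⟨P, c⟩ ∧ a ∈ B := by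
  refine ⟨insert a c, ⟨mem_insert_self _ _, mem_insert_self _ _⟩, ?_⟩
  rintro B ⟨hB, haB⟩
  rcases mem_insert.mp hB with rfl | hB
  · rfl
  · exact absurd haB (ins_a_not_mem_block ha hP hc (mem_of_mem_erase hB))

lemma delPart_insPart : delPart a (insPart a ⟨P, c⟩) = ⟨P, c⟩ := by
  have hac := ins_a_not_mem_c ha hP hc
  have hexu := insPart_existsUnique_a ha hP hc
  have hchoose : (insPart a ⟨P, c⟩).choose (fun B => a ∈ B) hexu = insert a c := by
    exact hexu.unique ⟨Finset.choose_mem (fun B => a ∈ B) _ hexu, Finset.choose_property (fun B => a ∈ B) _ hexu⟩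
      ⟨mem_insert_self _ _, mem_insert_self _ _⟩
  have herase : (insPart a ⟨P, c⟩).erase (insert a c) = P.erase c := by
    unfold insPart
    exact Finset.erase_insert (ins_new_block_not_mem ha hP hc)
  rw [delPart, dif_pos hexu]
  simp only [hchoose]
  by_cases hce : c = ∅
  · subst hce
    rw [if_pos (by simp), herase]
    simp [Finset.erase_eq_of_notMem (parts_not_empty_mem hP)]
  · have hcP : c ∈ P := by
      rcases mem_insert.mp hc with rfl | h
      · exact absurd rfl hce
      · exact h
    rw [if_neg ?hne]
    case hne =>
      intro h
      apply hce
      have := congrArg (Finset.erase · a) h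
      simpa [Finset.erase_insert hac] using this
    rw [herase, Finset.erase_insert hac]
    simp only [Sigma.mk.inj_iff, heq_eq_eq, and_true]
    exact Finset.insert_erase hcP

end Bij

section BijRev

variable {a : α} {s : Finset α} (ha : a ∉ s) {Q : Finset (Finset α)}
  (hQ : Q ∈ parts (insert a s))

include ha hQ

lemma del_exu : ∃! B, B ∈ Q ∧ a ∈ B := parts_existsUnique hQ (mem_insert_self a s)

lemma del_spec :
    ∀ A, A ∈ Q → a ∈ A →
      ((∀ B ∈ Q.erase A, a ∉ B ∧ B ⊆ s) ∧ A.erase a ⊆ s ∧ A.erase a ∉ Q) := by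
  intro A hA haA
  obtain ⟨B₀, hB₀, huniq⟩ := del_exu ha hQ
  have hAB₀ : A = B₀ := huniq A ⟨hA, haA⟩
  have hblock : ∀ B ∈ Q.erase A, a ∉ B ∧ B ⊆ s := by
    intro B hB
    have hBQ := mem_of_mem_erase hB
    have haB : a ∉ B := fun h => (ne_of_mem_erase hB) (hAB₀ ▸ huniq B ⟨hBQ, h⟩)
    refine ⟨haB, fun i hiB => ?_⟩
    rcases mem_insert.mp (parts_block_subset hQ hBQ hiB) with rfl | h
    · exact absurd hiB haB
    · exact h
  refine ⟨hblock, fun i hi => ?_, ?_⟩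
  · rcases mem_insert.mp (parts_block_subset hQ hA (mem_of_mem_erase hi)) with rfl | h
    · exact absurd rfl (ne_of_mem_erase hi)
    · exact h
  · intro hcQ
    rcases Finset.eq_empty_or_nonempty (A.erase a) with he | ⟨i, hi⟩
    · exact parts_not_empty_mem hQ (he ▸ hcQ)
    · have hiA : i ∈ A := mem_of_mem_erase hi
      have hia : i ≠ a := ne_of_mem_erase hi
      have hAc : A ≠ A.erase a := fun h => (Finset.notMem_erase a A) (h ▸ haA)
      have hiins : i ∈ insert a s := parts_block_subset hQ hA hiA
      obtain ⟨B₁, hB₁, huniq₁⟩ := parts_existsUnique hQ hiins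
      exact hAc ((huniq₁ A ⟨hA, hiA⟩).trans (huniq₁ (A.erase a) ⟨hcQ, hi⟩).symm)

lemma delPart_mem_sigma :
    delPart a Q ∈ (parts s).sigma (fun P => insert ∅ P) := by
  have hexu := del_exu ha hQ
  set A := Q.choose (fun B => a ∈ B) hexu with hAdef
  have hA : A ∈ Q := Finset.choose_mem (fun B => a ∈ B) _ hexu
  have haA : a ∈ A := Finset.choose_property (fun B => a ∈ B) _ hexu
  obtain ⟨hblock, hcs, hcQ⟩ := del_spec ha hQ A hA haA
  have hP0 : ∀ P₀ : Finset (Finset α), ((A = {a} ∧ P₀ = Q.erase A) ∨ (A ≠ {a} ∧ P₀ = insert (A.erase a) (Q.erase A))) → P₀ ∈ parts s := by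
    rintro P₀ hP₀
    rw [mem_parts]
    have hQblocks : ∀ B ∈ Q.erase A, B ⊆ s := fun B hB => (hblock B hB).2
    have hQempty : ∅ ∉ Q.erase A := fun h => parts_not_empty_mem hQ (mem_of_mem_erase h)
    have hcne : A ≠ {a} → A.erase a ≠ ∅ := by
      intro hAne h
      apply hAne
      apply Finset.eq_singleton_iff_unique_mem.mpr
      refine ⟨haA, fun x hx => ?_⟩
      by_contra hxa
      exact (Finset.notMem_empty x) (h ▸ Finset.mem_erase.mpr ⟨hxa, hx⟩)
    refine ⟨?_, ?_, ?_⟩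
    · intro B hB
      rcases hP₀ with ⟨-, rfl⟩ | ⟨hAne, rfl⟩
      · exact hQblocks B hB
      · rcases mem_insert.mp hB with rfl | hB
        · exact hcs
        · exact hQblocks B hB
    · rcases hP₀ with ⟨-, rfl⟩ | ⟨hAne, rfl⟩
      · exact hQempty
      · intro h
        rcases mem_insert.mp h with h | h
        · exact hcne hAne h.symm
        · exact hQempty h
    · intro i his
      have hia : i ≠ a := fun h => ha (h ▸ his)
      obtain ⟨B₁, ⟨hB₁Q, hiB₁⟩, huniq₁⟩ := parts_existsUnique hQ (mem_insert_of_mem his)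
      by_cases hiA : i ∈ A
      · -- B₁ = A; block in P₀ is A.erase a  (A ≠ {a} since i ∈ A, i ≠ a)
        have hB₁A : B₁ = A := (huniq₁ A ⟨hA, hiA⟩).symm
        have hAne : A ≠ {a} := by
          intro h
          rw [h, mem_singleton] at hiA
          exact hia hiA
        rcases hP₀ with ⟨hAeq, rfl⟩ | ⟨-, rfl⟩
        · exact absurd hAeq hAne
        · refine ⟨A.erase a, ⟨mem_insert_self _ _, mem_erase.mpr ⟨hia, hiA⟩⟩, ?_⟩
          rintro B ⟨hB, hiB⟩
          rcases mem_insert.mp hB with rfl | hB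
          · rfl
          · exact absurd ((huniq₁ B ⟨mem_of_mem_erase hB, hiB⟩).trans hB₁A)
              (ne_of_mem_erase hB)
      · have hB₁A : B₁ ≠ A := fun h => hiA (h ▸ hiB₁)
        have hB₁e : B₁ ∈ Q.erase A := mem_erase.mpr ⟨hB₁A, hB₁Q⟩
        have huB : ∀ B, (B ∈ Q.erase A ∧ i ∈ B) → B = B₁ := fun B hB =>
          huniq₁ B ⟨mem_of_mem_erase hB.1, hB.2⟩
        rcases hP₀ with ⟨-, rfl⟩ | ⟨-, rfl⟩
        · exact ⟨B₁, ⟨hB₁e, hiB₁⟩, fun B hB => huB B hB⟩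
        · refine ⟨B₁, ⟨mem_insert_of_mem hB₁e, hiB₁⟩, ?_⟩
          rintro B ⟨hB, hiB⟩
          rcases mem_insert.mp hB with rfl | hB
          · exact absurd (mem_of_mem_erase hiB) hiA
          · exact huB B ⟨hB, hiB⟩
  rw [delPart, dif_pos hexu]
  by_cases hAa : A = {a}
  · rw [← hAdef, if_pos hAa]
    refine Finset.mem_sigma.mpr ⟨hP0 _ (Or.inl ⟨hAa, rfl⟩), mem_insert_self _ _⟩
  · rw [← hAdef, if_neg hAa]
    exact Finset.mem_sigma.mpr ⟨hP0 _ (Or.inr ⟨hAa, rfl⟩), mem_insert_of_mem (mem_insert_self _ _)⟩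

lemma insPart_delPart : insPart a (delPart a Q) = Q := by
  have hexu := del_exu ha hQ
  set A := Q.choose (fun B => a ∈ B) hexu with hAdef
  have hA : A ∈ Q := Finset.choose_mem (fun B => a ∈ B) _ hexu
  have haA : a ∈ A := Finset.choose_property (fun B => a ∈ B) _ hexu
  obtain ⟨hblock, hcs, hcQ⟩ := del_spec ha hQ A hA haA
  have hins : insert a (A.erase a) = A := Finset.insert_erase haA
  rw [delPart, dif_pos hexu]
  by_cases hAa : A = {a}
  · rw [← hAdef, if_pos hAa]
    show insert (insert a ∅) (Finset.erase (Q.erase A) ∅) = Q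
    have : insert a (∅ : Finset α) = A := by rw [hAa]; rfl
    rw [Finset.erase_eq_of_notMem (fun h => parts_not_empty_mem hQ (mem_of_mem_erase h)), this]
    exact Finset.insert_erase hA
  · rw [← hAdef, if_neg hAa]
    show insert (insert a (A.erase a)) (Finset.erase (insert (A.erase a) (Q.erase A)) (A.erase a)) = Q
    rw [hins, Finset.erase_insert (fun h => hcQ (mem_of_mem_erase h))]
    exact Finset.insert_erase hA

end BijRev

lemma insPart_weight {R : Type*} [CommRing R] (x : R) {a : α} {s : Finset α} (ha : a ∉ s)
    {P : Finset (Finset α)} (hP : P ∈ parts s) {c : Finset α} (hc : c ∈ insert ∅ P) :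
    x ^ (insPart a ⟨P, c⟩).card *
        ((∏ B ∈ insPart a ⟨P, c⟩, (B.card - 1).factorial : ℕ) : R) =
      (if c = ∅ then x else (c.card : R)) *
        (x ^ P.card * ((∏ B ∈ P, (B.card - 1).factorial : ℕ) : R)) := by
  have hnotin := ins_new_block_not_mem ha hP hc
  have hac := ins_a_not_mem_c ha hP hc
  have hcard : (insPart a ⟨P, c⟩).card = (P.erase c).card + 1 :=
    card_insert_of_notMem hnotin
  have hcins : (insert a c).card = c.card + 1 := card_insert_of_notMem hac
  have hprodN : (∏ B ∈ insPart a ⟨P, c⟩, (B.card - 1).factorial) =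
      c.card.factorial * ∏ B ∈ P.erase c, (B.card - 1).factorial := by
    rw [insPart, Finset.prod_insert hnotin, hcins]
    simp
  by_cases hce : c = ∅
  · subst hce
    have herase : P.erase ∅ = P := Finset.erase_eq_of_notMem (parts_not_empty_mem hP)
    rw [if_pos rfl, hcard, hprodN, herase]
    push_cast [Finset.card_empty, Nat.factorial_zero]
    ring
  · have hcP : c ∈ P := by
      rcases mem_insert.mp hc with h | h
      · exact absurd h hce
      · exact h
    have hcpos : 0 < c.card := Finset.card_pos.mpr (Finset.nonempty_iff_ne_empty.mpr hce)
    have hPpos : 0 < P.card := Finset.card_pos.mpr ⟨c, hcP⟩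
    have hec : (P.erase c).card = P.card - 1 := Finset.card_erase_of_mem hcP
    have hcard2 : (insPart a ⟨P, c⟩).card = P.card := by
      rw [hcard, hec, Nat.sub_add_cancel hPpos]
    have hfac : c.card.factorial = c.card * (c.card - 1).factorial :=
      (Nat.mul_factorial_pred hcpos.ne').symm
    have hPprod : (∏ B ∈ P, (B.card - 1).factorial) =
        (c.card - 1).factorial * ∏ B ∈ P.erase c, (B.card - 1).factorial :=
      (Finset.mul_prod_erase P _ hcP).symm
    rw [if_neg hce, hcard2, hprodN, hfac, hPprod]
    push_cast
    ring

lemma parts_weight_sum {R : Type*} [CommRing R] (x : R) (s : Finset α) :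
    ∑ P ∈ parts s, x ^ P.card * ((∏ B ∈ P, (B.card - 1).factorial : ℕ) : R) =
      ∏ j ∈ Finset.range s.card, (x + (j : R)) := by
  induction s using Finset.induction_on with
  | empty =>
    have hpe : parts (∅ : Finset α) = {∅} := by
      ext P
      simp only [mem_parts, mem_singleton]
      constructor
      · rintro ⟨h1, h2, -⟩
        by_contra hne
        obtain ⟨B, hB⟩ := Finset.nonempty_iff_ne_empty.mpr hne
        exact h2 ((Finset.subset_empty.mp (h1 B hB)) ▸ hB)
      · rintro rfl
        exact ⟨fun B hB => absurd hB (Finset.notMem_empty B), Finset.notMem_empty _,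
          fun i hi => absurd hi (Finset.notMem_empty i)⟩
    rw [hpe]
    simp
  | @insert a s ha ih =>
    have key : ∑ pc ∈ (parts s).sigma (fun P => insert ∅ P),
          x ^ (insPart a pc).card * ((∏ B ∈ insPart a pc, (B.card - 1).factorial : ℕ) : R)
        = ∑ Q ∈ parts (insert a s),
            x ^ Q.card * ((∏ B ∈ Q, (B.card - 1).factorial : ℕ) : R) := by
      refine Finset.sum_nbij' (insPart a) (delPart a) ?_ ?_ ?_ ?_ ?_
      · rintro ⟨P, c⟩ hpc
        obtain ⟨hP, hc⟩ := Finset.mem_sigma.mp hpc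
        exact insPart_mem ha hP hc
      · intro Q hQ
        exact delPart_mem_sigma ha hQ
      · rintro ⟨P, c⟩ hpc
        obtain ⟨hP, hc⟩ := Finset.mem_sigma.mp hpc
        exact delPart_insPart ha hP hc
      · intro Q hQ
        exact insPart_delPart ha hQ
      · intro pc _
        rfl
    rw [← key, Finset.sum_sigma]
    have hstep : ∀ P ∈ parts s,
        (∑ c ∈ insert ∅ P,
          x ^ (insPart a ⟨P, c⟩).card * ((∏ B ∈ insPart a ⟨P, c⟩, (B.card - 1).factorial : ℕ) : R))
        = (x + (s.card : R)) * (x ^ P.card * ((∏ B ∈ P, (B.card - 1).factorial : ℕ) : R)) := by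
      intro P hP
      rw [Finset.sum_congr rfl (fun c hc => insPart_weight x ha hP hc)]
      rw [Finset.sum_insert (parts_not_empty_mem hP)]
      rw [if_pos rfl]
      have : ∑ c ∈ P, (if c = ∅ then x else ((c.card : R))) *
          (x ^ P.card * ((∏ B ∈ P, (B.card - 1).factorial : ℕ) : R))
          = (s.card : R) * (x ^ P.card * ((∏ B ∈ P, (B.card - 1).factorial : ℕ) : R)) := by
        rw [← Finset.sum_mul]
        congr 1
        have : ∀ c ∈ P, (if c = ∅ then x else ((c.card : R))) = ((c.card : ℕ) : R) := by
          intro c hcP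
          have hcne : c ≠ ∅ := fun h => parts_not_empty_mem hP (h ▸ hcP)
          rw [if_neg hcne]
        rw [Finset.sum_congr rfl this, ← Nat.cast_sum, parts_sum_card hP]
      rw [this]
      ring
    rw [Finset.sum_congr rfl hstep, ← Finset.mul_sum, ih,
      Finset.card_insert_of_notMem ha, Finset.prod_range_succ]
    ring


lemma eval_derivative_linear_prod (β : ℝ) (s : Finset ℕ) :
    Polynomial.eval β (Polynomial.derivative
        (∏ j ∈ s, ((Polynomial.X : Polynomial ℝ) + (j : Polynomial ℝ)))) =
      ∑ i ∈ s, ∏ j ∈ s.erase i, (β + (j : ℝ)) := by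
  induction s using Finset.induction_on with
  | empty => simp
  | @insert a s ha ih =>
    rw [Finset.prod_insert ha, Polynomial.derivative_mul, Finset.sum_insert ha,
      Finset.erase_insert ha]
    have h1 : Polynomial.derivative ((Polynomial.X : Polynomial ℝ) + (a : Polynomial ℝ)) = 1 := by
      simp
    rw [h1]
    simp only [Polynomial.eval_add, Polynomial.eval_mul, Polynomial.eval_one, one_mul,
      Polynomial.eval_X, Polynomial.eval_natCast, Polynomial.eval_prod]
    have h2 : ∀ i ∈ s, ∏ j ∈ (insert a s).erase i, (β + (j:ℝ))
        = (β + (a:ℝ)) * ∏ j ∈ s.erase i, (β + (j:ℝ)) := by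
      intro i hi
      have hia : a ≠ i := fun h => ha (h ▸ hi)
      rw [Finset.erase_insert_of_ne hia,
        Finset.prod_insert (fun h => ha (Finset.mem_of_mem_erase h))]
    rw [Finset.sum_congr rfl h2, ← Finset.mul_sum, ih]

/-- The set of all set partitions of `{1,…,n}` (encoded as `Fin n`):
families of nonempty blocks such that each element lies in exactly one block. -/
noncomputable def setPartitions (n : ℕ) : Finset (Finset (Finset (Fin n))) :=
  Finset.univ.filter (fun P => ∅ ∉ P ∧ ∀ i : Fin n, ∃! B, B ∈ P ∧ i ∈ B)

/-- The Fisher information of the Multivariate Ewens Distribution: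
`Σ_P p(P | β) · ( #P/β² − Σ_{j=0}^{n-1} 1/(β+j)² ) = (1/β)·Σ_{j=1}^{n-1} j/(β+j)²`,
where `p(P | β) = β^{#P} · Π_{B ∈ P} (|B| − 1)! / (β(β+1)⋯(β+n−1))`. -/
theorem med_fisher_information (n : ℕ) (hn : 2 ≤ n) (β : ℝ) (hβ : 0 < β) :
    ∑ P ∈ setPartitions n,
        (β ^ P.card * ∏ B ∈ P, (Nat.factorial (B.card - 1) : ℝ)) /
            (∏ j ∈ Finset.range n, (β + j)) *
          ((P.card : ℝ) / β ^ 2 - ∑ j ∈ Finset.range n, 1 / (β + j) ^ 2) =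
      (1 / β) * ∑ j ∈ Finset.Icc 1 (n - 1), (j : ℝ) / (β + j) ^ 2 := by
  classical
  have hβ' : β ≠ 0 := ne_of_gt hβ
  have hsp : setPartitions n = parts (Finset.univ : Finset (Fin n)) := by
    ext P
    simp [setPartitions, mem_parts]
  set D : ℝ := ∏ j ∈ Finset.range n, (β + j) with hD
  have hne : ∀ i : ℕ, (0:ℝ) < β + i := fun i => by positivity
  have hDpos : 0 < D := Finset.prod_pos (fun j _ => hne j)
  have hD' : D ≠ 0 := ne_of_gt hDpos
  set g : Finset (Finset (Fin n)) → ℕ := fun P => ∏ B ∈ P, (B.card - 1).factorial with hg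
  have hpoly : ∑ P ∈ parts (Finset.univ : Finset (Fin n)),
      (Polynomial.X : Polynomial ℝ) ^ P.card * (g P : Polynomial ℝ)
      = ∏ j ∈ Finset.range n, ((Polynomial.X : Polynomial ℝ) + (j : Polynomial ℝ)) := by
    have h := parts_weight_sum (R := Polynomial ℝ) Polynomial.X (Finset.univ : Finset (Fin n))
    simpa [hg] using h
  have hE1 : ∑ P ∈ parts (Finset.univ : Finset (Fin n)), β ^ P.card * (g P : ℝ) = D := by
    have h := congrArg (Polynomial.eval β) hpoly
    simpa [Polynomial.eval_finset_sum, Polynomial.eval_prod] using h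
  have hE2 : ∑ P ∈ parts (Finset.univ : Finset (Fin n)),
      (P.card : ℝ) * β ^ (P.card - 1) * (g P : ℝ)
      = ∑ i ∈ Finset.range n, ∏ j ∈ (Finset.range n).erase i, (β + j) := by
    have h := congrArg (fun p : Polynomial ℝ => Polynomial.eval β (Polynomial.derivative p)) hpoly
    simpa [map_sum, Polynomial.derivative_mul, Polynomial.derivative_X_pow,
      eval_derivative_linear_prod, Polynomial.eval_finset_sum, Polynomial.eval_prod,
      mul_comm, mul_assoc, mul_left_comm] using h
  set S1 : ℝ := ∑ i ∈ Finset.range n, (β + i)⁻¹ with hS1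
  set T : ℝ := ∑ j ∈ Finset.range n, 1 / (β + j) ^ 2 with hT
  have hPi : ∀ i ∈ Finset.range n, ∏ j ∈ (Finset.range n).erase i, (β + j) = D * (β + i)⁻¹ := by
    intro i hi
    have hmul := Finset.mul_prod_erase (Finset.range n) (fun j => β + (j:ℝ)) hi
    rw [eq_comm, hD, ← hmul, mul_comm (β + (i:ℝ)), mul_assoc,
      mul_inv_cancel₀ (ne_of_gt (hne i)), mul_one]
  have hE2' : ∑ P ∈ parts (Finset.univ : Finset (Fin n)),
      (P.card : ℝ) * β ^ P.card * (g P : ℝ) = β * (D * S1) := by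
    have hb : ∀ k : ℕ, (k : ℝ) * β ^ k = β * ((k : ℝ) * β ^ (k - 1)) := by
      intro k
      cases k with
      | zero => simp
      | succ m => rw [pow_succ, Nat.succ_sub_one]; ring
    calc ∑ P ∈ parts (Finset.univ : Finset (Fin n)), (P.card : ℝ) * β ^ P.card * (g P : ℝ)
        = ∑ P ∈ parts (Finset.univ : Finset (Fin n)),
            β * ((P.card : ℝ) * β ^ (P.card - 1) * (g P : ℝ)) := by
          refine Finset.sum_congr rfl fun P _ => ?_
          rw [hb P.card]; ring
      _ = β * ∑ i ∈ Finset.range n, ∏ j ∈ (Finset.range n).erase i, (β + j) := by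
          rw [← Finset.mul_sum, hE2]
      _ = β * (D * S1) := by
          rw [Finset.sum_congr rfl hPi, ← Finset.mul_sum]
  -- rewrite the main sum
  rw [hsp]
  have hterm : ∀ P ∈ parts (Finset.univ : Finset (Fin n)),
      (β ^ P.card * ∏ B ∈ P, (Nat.factorial (B.card - 1) : ℝ)) / D *
          ((P.card : ℝ) / β ^ 2 - T)
        = (P.card : ℝ) * β ^ P.card * (g P : ℝ) * (1 / (D * β ^ 2))
            - β ^ P.card * (g P : ℝ) * (T / D) := by
    intro P _
    have : (∏ B ∈ P, (Nat.factorial (B.card - 1) : ℝ)) = (g P : ℝ) := by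
      rw [hg]; push_cast; rfl
    rw [this]
    ring
  rw [Finset.sum_congr rfl hterm, Finset.sum_sub_distrib, ← Finset.sum_mul, ← Finset.sum_mul,
    hE1, hE2']
  have hstep : β * (D * S1) * (1 / (D * β ^ 2)) - D * (T / D) = S1 * β⁻¹ - T := by
    field_simp
  rw [hstep]
  have hsub : S1 * β⁻¹ - T = ∑ i ∈ Finset.range n, ((i:ℝ) / (β * (β + i) ^ 2)) := by
    rw [hS1, hT, Finset.sum_mul, ← Finset.sum_sub_distrib]
    refine Finset.sum_congr rfl fun i _ => ?_
    have h1 : β + (i:ℝ) ≠ 0 := ne_of_gt (hne i)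
    field_simp
    ring
  rw [hsub]
  rw [Finset.mul_sum, Finset.range_eq_Ico,
    Finset.sum_eq_sum_Ico_succ_bot (by omega : 0 < n)]
  have hIcc : Finset.Icc 1 (n - 1) = Finset.Ico 1 n := by
    rw [← Finset.Ico_add_one_right_eq_Icc]
    congr 1
    omega
  rw [hIcc]
  simp only [Nat.cast_zero, zero_div, zero_add]
  refine Finset.sum_congr rfl fun i hi => ?_
  have h1 : β + (i:ℝ) ≠ 0 := ne_of_gt (hne i)
  field_simp
end

section
/- For every integer n ≥ 2, the function f_n(β) = sqrt( (1/β) Σ_{j=1}^{n-1} j/(β+j)² ) is integrable on (0,∞), and its integral C(n) = ∫₀^∞ f_n(β) dβ satisfies 0 < C(n) ≤ π · sqrt(n(n−1)/2). In particular, the Jeffreys prior for the Multivariate Ewens Distribution is proper. -/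
open Finset Real MeasureTheory

/-- The Jeffreys prior for the Multivariate Ewens Distribution is proper: for `n ≥ 2`,
`f_n(β) = sqrt( (1/β) Σ_{j=1}^{n-1} j/(β+j)² )` is integrable on `(0,∞)` and its
integral `C(n)` satisfies `0 < C(n) ≤ π·sqrt(n(n−1)/2)`. -/
theorem med_jeffreys_prior_proper (n : ℕ) (hn : 2 ≤ n) :
    IntegrableOn
        (fun β : ℝ => Real.sqrt ((1 / β) * ∑ j ∈ Finset.Icc 1 (n - 1), (j : ℝ) / (β + j) ^ 2))
        (Set.Ioi 0) ∧
      0 < (∫ β in Set.Ioi (0 : ℝ),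
            Real.sqrt ((1 / β) * ∑ j ∈ Finset.Icc 1 (n - 1), (j : ℝ) / (β + j) ^ 2)) ∧
      (∫ β in Set.Ioi (0 : ℝ),
            Real.sqrt ((1 / β) * ∑ j ∈ Finset.Icc 1 (n - 1), (j : ℝ) / (β + j) ^ 2)) ≤
        π * Real.sqrt ((n : ℝ) * ((n : ℝ) - 1) / 2) := by
  set f : ℝ → ℝ := fun β : ℝ =>
    Real.sqrt ((1 / β) * ∑ j ∈ Finset.Icc 1 (n - 1), (j : ℝ) / (β + j) ^ 2) with hf
  set S : ℝ := (n : ℝ) * ((n : ℝ) - 1) / 2 with hS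
  -- sum value
  have hsumnat : (∑ j ∈ Finset.Icc 1 (n - 1), j) = n * (n - 1) / 2 := by
    have h1 : Finset.Icc 1 (n - 1) = Finset.Ico 1 n := by
      rw [← Finset.Ico_add_one_right_eq_Icc]
      congr 1
      omega
    rw [h1]
    have h2 : (∑ j ∈ Finset.range n, j) = ∑ j ∈ Finset.Ico 1 n, j := by
      rw [Finset.range_eq_Ico, ← Finset.sum_Ico_consecutive _ (Nat.zero_le 1) (by omega)]
      simp
    rw [← h2, Finset.sum_range_id]
  have hsum : (∑ j ∈ Finset.Icc 1 (n - 1), (j : ℝ)) = S := by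
    rw [← Nat.cast_sum, hsumnat, hS]
    have : (2 : ℕ) ∣ n * (n - 1) := Nat.even_mul_pred_self n |>.two_dvd
    rw [Nat.cast_div this (by norm_num)]
    push_cast [Nat.cast_sub (by omega : 1 ≤ n)]
    ring
  have hSpos : 0 < S := by
    rw [hS]
    have : (2:ℝ) ≤ (n:ℝ) := by exact_mod_cast hn
    nlinarith
  -- majorant
  set g : ℝ → ℝ := fun β => Real.sqrt S / (Real.sqrt β * (β + 1)) with hg
  set F : ℝ → ℝ := fun β => 2 * Real.sqrt S * Real.arctan (Real.sqrt β) with hF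
  have hderiv : ∀ β ∈ Set.Ioi (0:ℝ), HasDerivAt F (g β) β := by
    intro β hβ
    have hβ0 : (0:ℝ) < β := hβ
    have h1 : HasDerivAt Real.sqrt (1 / (2 * Real.sqrt β)) β :=
      Real.hasDerivAt_sqrt hβ0.ne'
    have h2 : HasDerivAt (fun x => Real.arctan (Real.sqrt x))
        ((1 + Real.sqrt β ^ 2)⁻¹ * (1 / (2 * Real.sqrt β))) β :=
      (Real.hasDerivAt_arctan _).comp β h1 |>.congr_deriv (by rw [div_eq_inv_mul] ; ring)
    have h3 := h2.const_mul (2 * Real.sqrt S)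
    refine h3.congr_deriv ?_
    have hsβ : (0:ℝ) < Real.sqrt β := Real.sqrt_pos.2 hβ0
    rw [Real.sq_sqrt hβ0.le, hg]
    field_simp
    ring
  have hgnonneg : ∀ β ∈ Set.Ioi (0:ℝ), 0 ≤ g β :=
    fun β hβ => div_nonneg (Real.sqrt_nonneg _)
      (mul_nonneg (Real.sqrt_nonneg _) (by simp at hβ; linarith))
  have hFcont : ContinuousWithinAt F (Set.Ici 0) 0 := by
    apply Continuous.continuousWithinAt
    exact (continuous_const.mul (Real.continuous_arctan.comp Real.continuous_sqrt))
  have hsqrt_top : Filter.Tendsto Real.sqrt Filter.atTop Filter.atTop := by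
    have h : Real.sqrt = fun x : ℝ => x ^ (1/2 : ℝ) := funext Real.sqrt_eq_rpow
    rw [h]
    exact tendsto_rpow_atTop (by norm_num)
  have hFtend : Filter.Tendsto F Filter.atTop (nhds (Real.sqrt S * π)) := by
    have h1 : Filter.Tendsto (fun β => Real.arctan (Real.sqrt β)) Filter.atTop (nhds (π/2)) :=
      (Real.tendsto_arctan_atTop.mono_right nhdsWithin_le_nhds).comp hsqrt_top
    have h2 := h1.const_mul (2 * Real.sqrt S)
    convert h2 using 2
    ring
  have hgint : IntegrableOn g (Set.Ioi 0) :=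
    integrableOn_Ioi_deriv_of_nonneg hFcont hderiv hgnonneg hFtend
  have hgval : ∫ β in Set.Ioi (0:ℝ), g β = π * Real.sqrt S := by
    rw [integral_Ioi_of_hasDerivAt_of_tendsto hFcont hderiv hgint hFtend]
    simp [hF, mul_comm]
  -- pointwise bound f ≤ g on Ioi 0
  have hfg : ∀ β ∈ Set.Ioi (0:ℝ), f β ≤ g β := by
    intro β hβ
    have hβ0 : (0:ℝ) < β := hβ
    have hb1 : (0:ℝ) < β + 1 := by linarith
    have hbound : (1 / β) * ∑ j ∈ Finset.Icc 1 (n - 1), (j : ℝ) / (β + j) ^ 2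
        ≤ (g β) ^ 2 := by
      have hterm : ∀ j ∈ Finset.Icc 1 (n-1), (j : ℝ) / (β + j) ^ 2 ≤ (j : ℝ) / (β + 1) ^ 2 := by
        intro j hj
        have hj1 : (1:ℝ) ≤ (j:ℝ) := by
          exact_mod_cast (Finset.mem_Icc.1 hj).1
        apply div_le_div_of_nonneg_left (by linarith) (by positivity)
        nlinarith
      have hsum_le : (∑ j ∈ Finset.Icc 1 (n - 1), (j : ℝ) / (β + j) ^ 2)
          ≤ S / (β + 1) ^ 2 := by
        calc (∑ j ∈ Finset.Icc 1 (n - 1), (j : ℝ) / (β + j) ^ 2)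
            ≤ ∑ j ∈ Finset.Icc 1 (n - 1), (j : ℝ) / (β + 1) ^ 2 := Finset.sum_le_sum hterm
          _ = S / (β + 1) ^ 2 := by rw [← Finset.sum_div, hsum]
      have hg2 : (g β) ^ 2 = (1/β) * (S / (β + 1) ^ 2) := by
        rw [hg]
        rw [div_pow, mul_pow, Real.sq_sqrt hSpos.le, Real.sq_sqrt hβ0.le]
        field_simp
      rw [hg2]
      exact mul_le_mul_of_nonneg_left hsum_le (by positivity)
    calc f β ≤ Real.sqrt ((g β)^2) := Real.sqrt_le_sqrt hbound
      _ = g β := Real.sqrt_sq (hgnonneg β hβ)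
  have hfnonneg : ∀ β, 0 ≤ f β := fun β => Real.sqrt_nonneg _
  have hfmeas : AEStronglyMeasurable f (volume.restrict (Set.Ioi 0)) := by
    apply Measurable.aestronglyMeasurable
    apply Measurable.sqrt
    apply Measurable.mul
    · exact measurable_const.div measurable_id
    · exact Finset.measurable_sum _ fun j _ =>
        measurable_const.div ((measurable_id.add_const _).pow measurable_const)
  have hfint : IntegrableOn f (Set.Ioi 0) := by
    apply Integrable.mono' hgint hfmeas
    filter_upwards [ae_restrict_mem measurableSet_Ioi] with β hβ
    rw [Real.norm_eq_abs, abs_of_nonneg (hfnonneg β)]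
    exact hfg β hβ
  refine ⟨hfint, ?_, ?_⟩
  · -- positivity
    rw [setIntegral_pos_iff_support_of_nonneg_ae
      (Filter.Eventually.of_forall fun β => hfnonneg β) hfint]
    have hsub : Set.Ioi (0:ℝ) ⊆ Function.support f ∩ Set.Ioi 0 := by
      intro β hβ
      refine ⟨?_, hβ⟩
      have hβ0 : (0:ℝ) < β := hβ
      have hmem : 1 ∈ Finset.Icc 1 (n-1) := Finset.mem_Icc.2 ⟨le_rfl, by omega⟩
      have hpos : 0 < (1 / β) * ∑ j ∈ Finset.Icc 1 (n - 1), (j : ℝ) / (β + j) ^ 2 := by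
        apply mul_pos (by positivity)
        apply Finset.sum_pos' ?_ ⟨1, hmem, ?_⟩
        · intro j hj
          have hj1 : (1:ℝ) ≤ (j:ℝ) := by exact_mod_cast (Finset.mem_Icc.1 hj).1
          positivity
        · push_cast; positivity
      simp only [hf, Function.mem_support]
      positivity
    calc (0:ENNReal) < volume (Set.Ioi (0:ℝ)) := by simp
      _ ≤ volume (Function.support f ∩ Set.Ioi 0) := measure_mono hsub
  · -- upper bound
    calc (∫ β in Set.Ioi (0:ℝ), f β) ≤ ∫ β in Set.Ioi (0:ℝ), g β :=
        setIntegral_mono_on hfint hgint measurableSet_Ioi hfg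
      _ = π * Real.sqrt S := hgval
end

section
/- For every integer n ≥ 2 and every real β > 0, the strict inequality 3(Σ_{j=1}^{n-1} j/(β+j)⁴)(Σ_{j=1}^{n-1} j/(β+j)²) > 2(Σ_{j=1}^{n-1} j/(β+j)³)² holds. -/
open Finset

/-- Key inequality for the log-convexity of the MED Jeffreys prior:
`3(Σ j/(β+j)⁴)(Σ j/(β+j)²) > 2(Σ j/(β+j)³)²`. -/
theorem med_logconvexity_inequality (n : ℕ) (hn : 2 ≤ n) (β : ℝ) (hβ : 0 < β) :
    2 * (∑ j ∈ Finset.Icc 1 (n - 1), (j : ℝ) / (β + j) ^ 3) ^ 2 <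
      3 * (∑ j ∈ Finset.Icc 1 (n - 1), (j : ℝ) / (β + j) ^ 4) *
        (∑ j ∈ Finset.Icc 1 (n - 1), (j : ℝ) / (β + j) ^ 2) := by
  set s := Finset.Icc 1 (n - 1)
  have hpos : ∀ j ∈ s, (0:ℝ) < β + j ∧ (0:ℝ) < (j:ℝ) := by
    intro j hj
    have h1 : 1 ≤ j := (Finset.mem_Icc.mp hj).1
    have : (0:ℝ) < (j:ℝ) := by exact_mod_cast Nat.pos_of_ne_zero (by omega)
    exact ⟨by linarith, this⟩
  have hf : ∀ j ∈ s, (0:ℝ) ≤ (j : ℝ) / (β + j) ^ 4 := fun j hj =>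
    div_nonneg (hpos j hj).2.le (by positivity)
  have hg : ∀ j ∈ s, (0:ℝ) ≤ (j : ℝ) / (β + j) ^ 2 := fun j hj =>
    div_nonneg (hpos j hj).2.le (by positivity)
  have ht : ∀ j ∈ s, ((j : ℝ) / (β + j) ^ 3) ^ 2 = (j:ℝ) / (β + j) ^ 4 * ((j:ℝ) / (β + j) ^ 2) := by
    intro j hj
    have h := (hpos j hj).1.ne'
    field_simp
  have hCS := Finset.sum_sq_le_sum_mul_sum_of_sq_eq_mul s hf hg ht
  have h1s : 1 ∈ s := Finset.mem_Icc.mpr ⟨le_refl 1, by omega⟩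
  have hS4 : 0 < ∑ j ∈ s, (j : ℝ) / (β + j) ^ 4 := by
    refine Finset.sum_pos' hf ⟨1, h1s, ?_⟩
    have := (hpos 1 h1s)
    exact div_pos this.2 (by positivity)
  have hS2 : 0 < ∑ j ∈ s, (j : ℝ) / (β + j) ^ 2 := by
    refine Finset.sum_pos' hg ⟨1, h1s, ?_⟩
    have := (hpos 1 h1s)
    exact div_pos this.2 (by positivity)
  nlinarith [mul_pos hS4 hS2]
end

section
/- For every integer n ≥ 2, the function f_n(β) = sqrt( (1/β) Σ_{j=1}^{n-1} j/(β+j)² ) is log-convex on (0,∞); that is, the function β ↦ log f_n(β) is convex on (0,∞). -/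
open Finset

/-- Hölder's inequality in geometric-mean form. -/
lemma holder_sum_rpow {ι : Type*} (s : Finset ι) (u v : ι → ℝ)
    (hu : ∀ i ∈ s, 0 ≤ u i) (hv : ∀ i ∈ s, 0 ≤ v i) {a b : ℝ}
    (ha : 0 < a) (hb : 0 < b) (hab : a + b = 1) :
    ∑ i ∈ s, (u i) ^ a * (v i) ^ b ≤ (∑ i ∈ s, u i) ^ a * (∑ i ∈ s, v i) ^ b := by
  have ha1 : a < 1 := by linarith
  have hpq : Real.HolderConjugate a⁻¹ b⁻¹ :=
    ⟨by rw [inv_inv, inv_inv, inv_one]; exact hab, inv_pos.mpr ha, inv_pos.mpr hb⟩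
  have H := Real.inner_le_Lp_mul_Lq s (fun i => u i ^ a) (fun i => v i ^ b) hpq
  have e1 : ∀ i ∈ s, |u i ^ a| ^ a⁻¹ = u i := by
    intro i hi
    rw [abs_of_nonneg (Real.rpow_nonneg (hu i hi) a), ← Real.rpow_mul (hu i hi),
      mul_inv_cancel₀ ha.ne', Real.rpow_one]
  have e2 : ∀ i ∈ s, |v i ^ b| ^ b⁻¹ = v i := by
    intro i hi
    rw [abs_of_nonneg (Real.rpow_nonneg (hv i hi) b), ← Real.rpow_mul (hv i hi),
      mul_inv_cancel₀ hb.ne', Real.rpow_one]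
  rw [Finset.sum_congr rfl e1, Finset.sum_congr rfl e2, one_div, inv_inv, one_div, inv_inv] at H
  exact H

/-- The Jeffreys prior density for the MED,
`f_n(β) = sqrt( (1/β) Σ_{j=1}^{n-1} j/(β+j)² )`, is log-convex on `(0,∞)`:
`β ↦ log f_n(β)` is convex on `(0,∞)`. -/
theorem med_jeffreys_log_convex (n : ℕ) (hn : 2 ≤ n) :
    ConvexOn ℝ (Set.Ioi 0)
      (fun β : ℝ =>
        Real.log (Real.sqrt ((1 / β) * ∑ j ∈ Finset.Icc 1 (n - 1), (j : ℝ) / (β + j) ^ 2))) := by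
  set S : ℝ → ℝ := fun β => ∑ j ∈ Finset.Icc 1 (n - 1), (j : ℝ) / (β + j) ^ 2 with hS_def
  have hmem : (1 : ℕ) ∈ Finset.Icc 1 (n - 1) := by
    simp only [Finset.mem_Icc]; omega
  have hSpos : ∀ β : ℝ, 0 < β → 0 < S β := by
    intro β hβ
    apply Finset.sum_pos' (fun j hj => by positivity)
    refine ⟨1, hmem, ?_⟩
    push_cast
    positivity
  -- convexity of log ∘ S
  have hlogS : ConvexOn ℝ (Set.Ioi 0) (fun β => Real.log (S β)) := by
    refine ⟨convex_Ioi 0, ?_⟩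
    intro x hx y hy a b ha hb hab
    rcases ha.eq_or_lt with rfl | ha'
    · have hb1 : b = 1 := by linarith
      subst hb1; simp
    rcases hb.eq_or_lt with rfl | hb'
    · have ha1 : a = 1 := by linarith
      subst ha1; simp
    simp only [smul_eq_mul] at *
    have hx0 : (0:ℝ) < x := hx
    have hy0 : (0:ℝ) < y := hy
    have hz0 : 0 < a * x + b * y := by positivity
    -- termwise log-convexity
    have hterm : ∀ j ∈ Finset.Icc 1 (n-1),
        (j : ℝ) / ((a * x + b * y) + j) ^ 2
          ≤ ((j : ℝ) / (x + j) ^ 2) ^ a * ((j : ℝ) / (y + j) ^ 2) ^ b := by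
      intro j hj
      have hj1 : (1:ℝ) ≤ (j:ℝ) := by
        have := (Finset.mem_Icc.mp hj).1
        exact_mod_cast this
      have hjpos : (0:ℝ) < (j:ℝ) := by linarith
      have hxj : (0:ℝ) < x + j := by linarith
      have hyj : (0:ℝ) < y + j := by linarith
      have hG : (x + j) ^ a * (y + j) ^ b ≤ (a * x + b * y) + j := by
        have := Real.geom_mean_le_arith_mean2_weighted ha hb hxj.le hyj.le hab
        calc (x + j) ^ a * (y + j) ^ b ≤ a * (x + j) + b * (y + j) := this
          _ = (a * x + b * y) + (a + b) * j := by ring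
          _ = (a * x + b * y) + j := by rw [hab]; ring
      have hGpos : 0 < (x + j) ^ a * (y + j) ^ b := by positivity
      have e1 : ∀ (c w : ℝ), 0 ≤ w → ((w ^ 2 : ℝ)) ^ c = (w ^ c) ^ 2 := by
        intro c w hw
        rw [← Real.rpow_natCast w 2, ← Real.rpow_mul hw, mul_comm, Real.rpow_mul hw,
          Real.rpow_natCast]
      rw [Real.div_rpow hjpos.le (by positivity), Real.div_rpow hjpos.le (by positivity),
        div_mul_div_comm, ← Real.rpow_add hjpos, hab, Real.rpow_one,
        e1 a (x + j) hxj.le, e1 b (y + j) hyj.le, ← mul_pow]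
      apply div_le_div_of_nonneg_left hjpos.le (by positivity)
      calc ((x + j) ^ a * (y + j) ^ b) ^ 2 ≤ ((a * x + b * y) + j) ^ 2 := by
            apply pow_le_pow_left₀ hGpos.le hG
        _ = _ := rfl
    have hsum : S (a * x + b * y)
        ≤ (S x) ^ a * (S y) ^ b := by
      calc S (a * x + b * y)
          ≤ ∑ j ∈ Finset.Icc 1 (n-1),
              ((j : ℝ) / (x + j) ^ 2) ^ a * ((j : ℝ) / (y + j) ^ 2) ^ b :=
            Finset.sum_le_sum hterm
        _ ≤ (S x) ^ a * (S y) ^ b := by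
            apply holder_sum_rpow
            · intro j hj
              have hj1 : (1:ℝ) ≤ (j:ℝ) := by
                exact_mod_cast (Finset.mem_Icc.mp hj).1
              positivity
            · intro j hj
              have hj1 : (1:ℝ) ≤ (j:ℝ) := by
                exact_mod_cast (Finset.mem_Icc.mp hj).1
              positivity
            · exact ha'
            · exact hb'
            · exact hab
    have hSx := hSpos x hx0
    have hSy := hSpos y hy0
    calc Real.log (S (a * x + b * y)) ≤ Real.log ((S x) ^ a * (S y) ^ b) :=
          Real.log_le_log (hSpos _ hz0) hsum
      _ = a * Real.log (S x) + b * Real.log (S y) := by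
          rw [Real.log_mul (by positivity) (by positivity),
            Real.log_rpow hSx, Real.log_rpow hSy]
  -- -log convex
  have hneglog : ConvexOn ℝ (Set.Ioi 0) (fun β : ℝ => -Real.log β) :=
    strictConcaveOn_log_Ioi.concaveOn.neg
  have haux : ConvexOn ℝ (Set.Ioi 0)
      (fun β : ℝ => (1/2 : ℝ) • (Real.log (S β) + -Real.log β)) :=
    (hlogS.add hneglog).smul (by norm_num)
  refine haux.congr fun β hβ => ?_
  have hβ0 : (0:ℝ) < β := hβ
  have hSb := hSpos β hβ0
  have harg : 0 < (1 / β) * S β := by positivity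
  simp only [smul_eq_mul]
  have hlb : Real.log (1 / β) = -Real.log β := by rw [one_div, Real.log_inv]
  rw [Real.log_sqrt harg.le, Real.log_mul (one_div_pos.mpr hβ0).ne' hSb.ne', hlb]
  ring
end

section
/- For every integer n ≥ 2 and every real s ≥ 1, the integral ∫₀^∞ β^s · sqrt( (1/β) Σ_{j=1}^{n-1} j/(β+j)² ) dβ diverges (equals +∞). In particular, the Jeffreys prior for the Multivariate Ewens Distribution has no finite moments. -/
open Finset MeasureTheory
open scoped ENNReal

lemma med_aux_top : ∫⁻ x in Set.Ioi (1:ℝ),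
    ENNReal.ofReal (x ^ (-(1/2) : ℝ) / 2) = ⊤ := by
  by_contra h
  have hmeas : Measurable fun x : ℝ => x ^ (-(1/2) : ℝ) / 2 := by fun_prop
  have hfin : HasFiniteIntegral (fun x : ℝ => x ^ (-(1/2) : ℝ) / 2)
      (volume.restrict (Set.Ioi (1:ℝ))) := by
    rw [hasFiniteIntegral_iff_ofReal]
    · exact lt_top_iff_ne_top.2 h
    · filter_upwards [ae_restrict_mem measurableSet_Ioi] with x hx
      have hx0 : (0:ℝ) < x := lt_trans one_pos hx
      positivity
  have hint : IntegrableOn (fun x : ℝ => x ^ (-(1/2) : ℝ) / 2) (Set.Ioi 1) :=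
    ⟨hmeas.aestronglyMeasurable, hfin⟩
  have hint2 : IntegrableOn (fun x : ℝ => x ^ (-(1/2) : ℝ)) (Set.Ioi 1) := by
    have := hint.const_mul (2:ℝ)
    simpa [mul_div_cancel₀, IntegrableOn] using this
  rw [integrableOn_Ioi_rpow_iff one_pos] at hint2
  norm_num at hint2

/-- The Jeffreys prior for the MED has no finite moments: for every `n ≥ 2` and `s ≥ 1`,
`∫₀^∞ β^s · sqrt( (1/β) Σ_{j=1}^{n-1} j/(β+j)² ) dβ = +∞`. -/
theorem med_jeffreys_no_moments (n : ℕ) (hn : 2 ≤ n) (s : ℝ) (hs : 1 ≤ s) :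
    ∫⁻ β in Set.Ioi (0 : ℝ),
        ENNReal.ofReal
          (β ^ s *
            Real.sqrt ((1 / β) * ∑ j ∈ Finset.Icc 1 (n - 1), (j : ℝ) / (β + j) ^ 2)) = ⊤ := by
  rw [eq_top_iff]
  have hgmeas : Measurable fun β : ℝ => ENNReal.ofReal
      (β ^ s * Real.sqrt ((1 / β) * ∑ j ∈ Finset.Icc 1 (n - 1), (j : ℝ) / (β + j) ^ 2)) := by
    fun_prop
  calc (⊤:ℝ≥0∞) = ∫⁻ x in Set.Ioi (1:ℝ), ENNReal.ofReal (x ^ (-(1/2):ℝ)/2) :=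
        med_aux_top.symm
    _ ≤ ∫⁻ β in Set.Ioi (1:ℝ), ENNReal.ofReal
          (β ^ s * Real.sqrt ((1 / β) * ∑ j ∈ Finset.Icc 1 (n - 1), (j : ℝ) / (β + j) ^ 2)) := by
        refine setLIntegral_mono hgmeas fun x hx => ?_
        have hx1 : (1:ℝ) < x := hx
        have hx0 : (0:ℝ) < x := lt_trans one_pos hx1
        apply ENNReal.ofReal_le_ofReal
        set a := Real.sqrt x with ha
        have ha2 : a ^ 2 = x := Real.sq_sqrt hx0.le
        have ha1 : 1 ≤ a := by
          rw [ha, show (1:ℝ) = Real.sqrt 1 by simp]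
          exact Real.sqrt_le_sqrt hx1.le
        have ha0 : 0 < a := lt_of_lt_of_le one_pos ha1
        have hS : 1/(x+1)^2 ≤ ∑ j ∈ Finset.Icc 1 (n - 1), (j : ℝ) / (x + j) ^ 2 := by
          have h1 : (1:ℕ) ∈ Finset.Icc 1 (n-1) := by
            simp only [Finset.mem_Icc]
            omega
          have := Finset.single_le_sum (f := fun j : ℕ => (j:ℝ)/(x+j)^2)
            (fun j _ => by positivity) h1
          simpa using this
        have hsq0 : Real.sqrt (1/x * (1/(x+1)^2)) = 1/(a*(x+1)) := by
          rw [show 1/x * (1/(x+1)^2) = (1/(a*(x+1)))^2 by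
            rw [← ha2]; field_simp]
          exact Real.sqrt_sq (by positivity)
        have hsq : 1/(a*(x+1)) ≤
            Real.sqrt ((1 / x) * ∑ j ∈ Finset.Icc 1 (n - 1), (j : ℝ) / (x + j) ^ 2) := by
          rw [← hsq0]
          apply Real.sqrt_le_sqrt
          exact mul_le_mul_of_nonneg_left hS (by positivity)
        have hxs : x ≤ x ^ s := by
          calc x = x ^ (1:ℝ) := (Real.rpow_one x).symm
            _ ≤ x ^ s := Real.rpow_le_rpow_of_exponent_le hx1.le hs
        have hfirst : x ^ (-(1/2):ℝ)/2 ≤ x * (1/(a*(x+1))) := by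
          have hrw : x ^ (-(1/2):ℝ) = 1/a := by
            rw [Real.rpow_neg hx0.le, ha, Real.sqrt_eq_rpow]
            exact (one_div _).symm
          rw [hrw, div_div, mul_one_div, div_le_div_iff₀ (by positivity) (by positivity)]
          nlinarith [ha2, ha0, ha1, hx1]
        calc x ^ (-(1/2):ℝ)/2 ≤ x * (1/(a*(x+1))) := hfirst
          _ ≤ x ^ s * Real.sqrt ((1 / x) * ∑ j ∈ Finset.Icc 1 (n - 1), (j : ℝ) / (x + j) ^ 2) :=
            mul_le_mul hxs hsq (by positivity) (le_trans hx0.le hxs)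
    _ ≤ _ := lintegral_mono_set (Set.Ioi_subset_Ioi (by norm_num))
end
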